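/- Let G = (V, E) be a simple graph with vertices v₁, …, v_n. For each i ∈ {1, …, n}, define the n-qubit Pauli string o_i by: the j-th entry of o_i is Z if j = i; X if j > i and {v_i, v_j} ∉ E; and I otherwise. Then for all i < j, the matrices o_i and o_j commute if and only if {v_i, v_j} ∈ E; moreover, when they commute they qubit-wise commute. -/

import Mathlib

open Matrix Finset

inductive Pauli : Type
  | I | X | Y | Z
  deriving DecidableEq

instance instFintypePauli : Fintype Pauli :=
  ⟨{Pauli.I, Pauli.X, Pauli.Y, Pauli.Z}, fun x => by cases x <;> decide⟩

noncomputable def Pauli.mat : Pauli → Matrix (Fin 2) (Fin 2) ℂ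
  | .I => 1
  | .X => !![0, 1; 1, 0]
  | .Y => !![0, -Complex.I; Complex.I, 0]
  | .Z => !![1, 0; 0, -1]

/-- An `N`-qubit Pauli string: a function from qubit indices to single-qubit Paulis. -/
abbrev PauliString (N : ℕ) := Fin N → Pauli

/-- The `2^N × 2^N` matrix of a Pauli string, as the tensor (Kronecker) product of its
entries, with rows/columns indexed by `Fin N → Fin 2`. -/
noncomputable def Pmat {N : ℕ} (A : PauliString N) :
    Matrix (Fin N → Fin 2) (Fin N → Fin 2) ℂ :=
  Matrix.of fun x y => ∏ j, (A j).mat (x j) (y j)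

/-- The Pauli string `o_i` associated with vertex `v_i` of a graph `G` in the reduction
from MIN-CLIQUE-COVER: `Z` at index `i`, `X` at each index `j > i` with `{v_i, v_j} ∉ E`,
and `I` elsewhere. -/
def oStr {n : ℕ} (G : SimpleGraph (Fin n)) [DecidableRel G.Adj] (i : Fin n) :
    PauliString n := fun j =>
  if j = i then Pauli.Z
  else if i < j ∧ ¬ G.Adj i j then Pauli.X
  else Pauli.I

lemma Pmat_mul {N : ℕ} (A B : PauliString N) :
    Pmat A * Pmat B = Matrix.of fun x y => ∏ k, ((A k).mat * (B k).mat) (x k) (y k) := by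
  ext x y
  simp only [Pmat, Matrix.mul_apply, Matrix.of_apply, ← Finset.prod_mul_distrib]
  exact (Fintype.prod_sum fun k (a : Fin 2) => (A k).mat (x k) a * (B k).mat a (y k)).symm

lemma pauli_XZ : Pauli.X.mat * Pauli.Z.mat = !![0, -1; 1, 0] := by
  simp [Pauli.mat]

lemma pauli_ZX : Pauli.Z.mat * Pauli.X.mat = !![0, 1; -1, 0] := by
  simp [Pauli.mat]

/-- In the reduction from MIN-CLIQUE-COVER: for `i < j`, the matrices of `o_i` and `o_j`
commute iff `{v_i, v_j}` is an edge of `G`; moreover when they commute they qubit-wise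
commute. -/
theorem oStr_commute_iff_adj {n : ℕ} (G : SimpleGraph (Fin n)) [DecidableRel G.Adj]
    (i j : Fin n) (hij : i < j) :
    (Pmat (oStr G i) * Pmat (oStr G j) = Pmat (oStr G j) * Pmat (oStr G i) ↔ G.Adj i j) ∧
    (Pmat (oStr G i) * Pmat (oStr G j) = Pmat (oStr G j) * Pmat (oStr G i) →
      ∀ k, (oStr G i k).mat * (oStr G j k).mat = (oStr G j k).mat * (oStr G i k).mat) := by
  have hne : i ≠ j := hij.ne
  -- if Adj, qubit-wise commuting
  have hqw : G.Adj i j → ∀ k,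
      (oStr G i k).mat * (oStr G j k).mat = (oStr G j k).mat * (oStr G i k).mat := by
    intro hA k
    by_cases hki : k = i
    · have e1 : oStr G i k = Pauli.Z := by simp [oStr, hki]
      have e2 : oStr G j k = Pauli.I := by
        simp [oStr, hki, hne, not_lt.mpr hij.le]
      rw [e1, e2]; simp [Pauli.mat]
    · by_cases hkj : k = j
      · have e1 : oStr G i k = Pauli.I := by simp [oStr, hkj, hne.symm, hA]
        have e2 : oStr G j k = Pauli.Z := by simp [oStr, hkj]
        rw [e1, e2]; simp [Pauli.mat]
      · have hp : oStr G i k = Pauli.X ∨ oStr G i k = Pauli.I := by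
          unfold oStr; rw [if_neg hki]; split <;> simp
        have hq : oStr G j k = Pauli.X ∨ oStr G j k = Pauli.I := by
          unfold oStr; rw [if_neg hkj]; split <;> simp
        rcases hp with hp | hp <;> rcases hq with hq | hq <;>
          rw [hp, hq] <;> simp [Pauli.mat]
  -- qubit-wise commuting implies commuting
  have hcomm : (∀ k, (oStr G i k).mat * (oStr G j k).mat
        = (oStr G j k).mat * (oStr G i k).mat) →
      Pmat (oStr G i) * Pmat (oStr G j) = Pmat (oStr G j) * Pmat (oStr G i) := by
    intro h
    rw [Pmat_mul, Pmat_mul]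
    ext x y
    simp only [Matrix.of_apply]
    exact Finset.prod_congr rfl fun k _ => by rw [h k]
  -- non-adjacent implies not commuting
  have hnc : ¬ G.Adj i j →
      Pmat (oStr G i) * Pmat (oStr G j) ≠ Pmat (oStr G j) * Pmat (oStr G i) := by
    intro hA heq
    rw [Pmat_mul, Pmat_mul] at heq
    set y : Fin n → Fin 2 := fun k =>
      if (oStr G i k = Pauli.X) ↔ (oStr G j k = Pauli.X) then 0 else 1 with hy
    have h0 : (Matrix.of fun x y => ∏ k, ((oStr G i k).mat * (oStr G j k).mat) (x k) (y k))
          (fun _ => 0) y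
        = (Matrix.of fun x y => ∏ k, ((oStr G j k).mat * (oStr G i k).mat) (x k) (y k))
          (fun _ => 0) y := by rw [heq]
    simp only [Matrix.of_apply] at h0
    have hij' : oStr G i j = Pauli.X := by simp [oStr, hne.symm, hij, hA]
    have hjj : oStr G j j = Pauli.Z := by simp [oStr]
    have hyj : y j = 1 := by simp [hy, hij', hjj]
    have hf : ∀ k, ((oStr G i k).mat * (oStr G j k).mat) (0 : Fin 2) (y k)
        = if k = j then -1 else 1 := by
      intro k
      by_cases hkj : k = j
      · subst hkj
        rw [hij', hjj, hyj, pauli_XZ]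
        simp
      · rw [if_neg hkj]
        by_cases hki : k = i
        · have e1 : oStr G i k = Pauli.Z := by simp [oStr, hki]
          have e2 : oStr G j k = Pauli.I := by
            simp [oStr, hki, hne, not_lt.mpr hij.le]
          rw [e1, e2]
          simp [hy, e1, e2, Pauli.mat]
        · have hp : oStr G i k = Pauli.X ∨ oStr G i k = Pauli.I := by
            unfold oStr; rw [if_neg hki]; split <;> simp
          have hq : oStr G j k = Pauli.X ∨ oStr G j k = Pauli.I := by
            unfold oStr; rw [if_neg hkj]; split <;> simp
          rcases hp with hp | hp <;> rcases hq with hq | hq <;>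
            rw [hp, hq] <;>
            simp [hy, hp, hq, Pauli.mat, Matrix.mul_apply, Fin.sum_univ_two]
    have hg : ∀ k, ((oStr G j k).mat * (oStr G i k).mat) (0 : Fin 2) (y k) = 1 := by
      intro k
      by_cases hkj : k = j
      · subst hkj
        rw [hij', hjj, hyj, pauli_ZX]
        simp
      · by_cases hki : k = i
        · have e1 : oStr G i k = Pauli.Z := by simp [oStr, hki]
          have e2 : oStr G j k = Pauli.I := by
            simp [oStr, hki, hne, not_lt.mpr hij.le]
          rw [e1, e2]
          simp [hy, e1, e2, Pauli.mat]
        · have hp : oStr G i k = Pauli.X ∨ oStr G i k = Pauli.I := by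
            unfold oStr; rw [if_neg hki]; split <;> simp
          have hq : oStr G j k = Pauli.X ∨ oStr G j k = Pauli.I := by
            unfold oStr; rw [if_neg hkj]; split <;> simp
          rcases hp with hp | hp <;> rcases hq with hq | hq <;>
            rw [hp, hq] <;>
            simp [hy, hp, hq, Pauli.mat, Matrix.mul_apply, Fin.sum_univ_two]
    rw [Finset.prod_congr rfl fun k _ => hf k,
        Finset.prod_congr rfl fun k _ => hg k] at h0
    simp [Finset.prod_ite_eq'] at h0
    norm_num at h0
  refine ⟨⟨fun h => ?_, fun h => hcomm (hqw h)⟩, fun h => hqw ?_⟩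
  · by_contra hA; exact hnc hA h
  · by_contra hA; exact hnc hA h
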